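/- Let k be a field, H a Hopf algebra over k, and R a unitary universal R-matrix on H (R·τ(R) = 1). Let F = {(id⊗l)(R) : l ∈ H*} be the image of the map α(l) = (id⊗l)(R). Then: (1) F is a subalgebra of H containing 1; (2) Δ(F) is contained in the image of the canonical map F⊗F → H⊗H; (3) S(F) ⊆ F; (4) R lies in the image of the canonical map F⊗F → H⊗H; and (5) R is nondegenerate on F, i.e. writing R as an element R' of F⊗F, the induced linear map F* → F, m ↦ (id⊗m)(R'), is bijective. -/

import Mathlib

open scoped TensorProduct

noncomputable section

variable (k H : Type*) [Field k] [Ring H] [HopfAlgebra k H]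

/-- The comultiplication as an algebra map. -/
abbrev Δ : H →ₐ[k] H ⊗[k] H := Bialgebra.comulAlgHom k H

/-- The flip `x ⊗ y ↦ y ⊗ x` of the tensor square, as an algebra map. -/
abbrev τ : H ⊗[k] H →ₐ[k] H ⊗[k] H := (Algebra.TensorProduct.comm k H H).toAlgHom

/-- `x ⊗ y ↦ x ⊗ y ⊗ 1`. -/
abbrev ι₁₂ : H ⊗[k] H →ₐ[k] H ⊗[k] (H ⊗[k] H) :=
  Algebra.TensorProduct.map (AlgHom.id k H) Algebra.TensorProduct.includeLeft

/-- `x ⊗ y ↦ x ⊗ 1 ⊗ y`. -/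
abbrev ι₁₃ : H ⊗[k] H →ₐ[k] H ⊗[k] (H ⊗[k] H) :=
  Algebra.TensorProduct.map (AlgHom.id k H) Algebra.TensorProduct.includeRight

/-- `x ⊗ y ↦ 1 ⊗ x ⊗ y`. -/
abbrev ι₂₃ : H ⊗[k] H →ₐ[k] H ⊗[k] (H ⊗[k] H) :=
  Algebra.TensorProduct.includeRight

/-- `id ⊗ Δ`. -/
abbrev idΔ : H ⊗[k] H →ₐ[k] H ⊗[k] (H ⊗[k] H) :=
  Algebra.TensorProduct.map (AlgHom.id k H) (Bialgebra.comulAlgHom k H)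

/-- `Δ ⊗ id` (re-associated to land in `H ⊗ (H ⊗ H)`). -/
abbrev Δid : H ⊗[k] H →ₐ[k] H ⊗[k] (H ⊗[k] H) :=
  (Algebra.TensorProduct.assoc k k k H H H).toAlgHom.comp
    (Algebra.TensorProduct.map (Bialgebra.comulAlgHom k H) (AlgHom.id k H))

/-- `R` is a universal R-matrix (quasitriangular structure) on `H`. -/
def IsUnivRMatrix (R : H ⊗[k] H) : Prop :=
  IsUnit R ∧
  (∀ h : H, R * τ k H (Δ k H h) = Δ k H h * R) ∧
  idΔ k H R = ι₁₃ k H R * ι₁₂ k H R ∧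
  Δid k H R = ι₁₃ k H R * ι₂₃ k H R

/-- `ε ⊗ id : H ⊗ H → H`, `x ⊗ y ↦ ε(x)·y`. -/
abbrev εid : H ⊗[k] H →ₐ[k] H :=
  (Algebra.TensorProduct.lid k H).toAlgHom.comp
    (Algebra.TensorProduct.map (Bialgebra.counitAlgHom k H) (AlgHom.id k H))

/-- `id ⊗ ε : H ⊗ H → H`, `x ⊗ y ↦ ε(y)·x`. -/
abbrev idε : H ⊗[k] H →ₐ[k] H :=
  ((Algebra.TensorProduct.rid k k H).toAlgHom.restrictScalars k).comp
    (Algebra.TensorProduct.map (AlgHom.id k H) (Bialgebra.counitAlgHom k H))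

/-- `S ⊗ id : H ⊗ H → H ⊗ H`. -/
abbrev Sid : H ⊗[k] H →ₗ[k] H ⊗[k] H :=
  LinearMap.rTensor H (HopfAlgebra.antipode (R := k))

/-- `S ⊗ S : H ⊗ H → H ⊗ H`. -/
abbrev SS : H ⊗[k] H →ₗ[k] H ⊗[k] H :=
  TensorProduct.map (HopfAlgebra.antipode (R := k)) (HopfAlgebra.antipode (R := k))

/-- The Markov element `u = μ((S ⊗ id)(τ(R)))` of a bivector `R`. -/
def markov (R : H ⊗[k] H) : H :=
  LinearMap.mul' k H (Sid k H ((TensorProduct.comm k H H) R))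

/-- `(id ⊗ l)(R)` : applying a linear functional to the second tensor factor. -/
def evR (l : H →ₗ[k] k) : H ⊗[k] H →ₗ[k] H :=
  (TensorProduct.rid k H).toLinearMap ∘ₗ LinearMap.lTensor H l

/-- `(l ⊗ id)(R)` : applying a linear functional to the first tensor factor. -/
def evL (l : H →ₗ[k] k) : H ⊗[k] H →ₗ[k] H :=
  (TensorProduct.lid k H).toLinearMap ∘ₗ LinearMap.rTensor H l

/-- The subspace `H_l = {(id ⊗ l)(R) : l ∈ H*}`. -/
def Hl (R : H ⊗[k] H) : Set H := Set.range fun l : H →ₗ[k] k => evR k H l R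

/-- The subspace `H_r = {(l ⊗ id)(R) : l ∈ H*}`. -/
def Hr (R : H ⊗[k] H) : Set H := Set.range fun l : H →ₗ[k] k => evL k H l R

/-- `H` is cocommutative: `τ ∘ Δ = Δ`. -/
def IsCocomm : Prop :=
  ∀ x : H, (TensorProduct.comm k H H) (Coalgebra.comul (R := k) x) = Coalgebra.comul x

/-- The adjoint action `x ↦ x^h = Σ h₍₁₎ · x · S(h₍₂₎)` of `h`, as an endomorphism of `H`. -/
def adEnd (h : H) : H →ₗ[k] H :=
  TensorProduct.lift
    (LinearMap.mk₂ k
      (fun a b => LinearMap.mulRight k (HopfAlgebra.antipode (R := k) b) ∘ₗ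
        LinearMap.mulLeft k a)
      (fun a a' b => by ext x; simp [add_mul])
      (fun c a b => by ext x; simp [smul_mul_assoc])
      (fun a b b' => by ext x; simp [mul_add])
      (fun c a b => by ext x; simp [mul_smul_comm]))
    (Coalgebra.comul h)



open scoped TensorProduct
open Submodule Module

noncomputable section GenLemmas

variable {k M N : Type*} [Field k] [AddCommGroup M] [Module k M] [AddCommGroup N] [Module k N]

/-- evaluation of a functional on the second leg -/
def ev2 (l : N →ₗ[k] k) : M ⊗[k] N →ₗ[k] M :=
  (TensorProduct.rid k M).toLinearMap ∘ₗ LinearMap.lTensor M l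

@[simp] lemma ev2_tmul (l : N →ₗ[k] k) (m : M) (n : N) :
    ev2 l (m ⊗ₜ[k] n) = l n • m := by simp [ev2]

/-- span of the first legs -/
def fstSpan (x : M ⊗[k] N) : Submodule k M :=
  span k (Set.range fun l : N →ₗ[k] k => ev2 l x)

lemma ev2_sum_mem_span {ι : Type*} (s : Finset ι) (m : ι → M) (n : ι → N) (l : N →ₗ[k] k) :
    ev2 l (∑ i ∈ s, m i ⊗ₜ[k] n i) ∈ span k (m '' s) := by
  rw [map_sum]
  exact Submodule.sum_mem _ fun i hi => by
    rw [ev2_tmul]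
    exact Submodule.smul_mem _ _ (subset_span ⟨i, hi, rfl⟩)

lemma fstSpan_le {ι : Type*} {s : Finset ι} {m : ι → M} {n : ι → N} {x : M ⊗[k] N}
    (hx : x = ∑ i ∈ s, m i ⊗ₜ[k] n i) :
    fstSpan x ≤ span k (m '' s) := by
  rw [fstSpan, span_le]
  rintro _ ⟨l, rfl⟩
  rw [hx]
  exact ev2_sum_mem_span s m n l

lemma exists_ev2_eq {q : ℕ} (m : Fin q → M) (n : Fin q → N)
    (hn : LinearIndependent k n) (i₀ : Fin q) :
    ∃ l : N →ₗ[k] k, ev2 l (∑ i, m i ⊗ₜ[k] n i) = m i₀ := by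
  classical
  set W := span k (Set.range n)
  obtain ⟨π, hπ⟩ := W.subtype.exists_leftInverse_of_injective W.ker_subtype
  set B := Basis.span hn
  refine ⟨B.coord i₀ ∘ₗ π, ?_⟩
  have hl : ∀ j, (B.coord i₀ ∘ₗ π) (n j) = if i₀ = j then (1:k) else 0 := by
    intro j
    have h1 : π (n j) = B j := by
      have : (⟨n j, subset_span ⟨j, rfl⟩⟩ : W) = B j := by
        apply Subtype.ext; simp [B, Basis.span_apply]
      rw [← this]
      have := LinearMap.congr_fun hπ (⟨n j, subset_span ⟨j, rfl⟩⟩ : W)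
      simpa using this
    simp [LinearMap.comp_apply, h1, Basis.coord_apply, Finsupp.single_apply, eq_comm]
  rw [map_sum]
  rw [Finset.sum_congr rfl (fun j _ => by rw [ev2_tmul, hl j])]
  simp

lemma leg_mem_fstSpan {q : ℕ} {m : Fin q → M} {n : Fin q → N} {x : M ⊗[k] N}
    (hx : x = ∑ i, m i ⊗ₜ[k] n i) (hn : LinearIndependent k n) (i₀ : Fin q) :
    m i₀ ∈ fstSpan x := by
  obtain ⟨l, hl⟩ := exists_ev2_eq m n hn i₀
  exact subset_span ⟨l, by simpa [hx] using hl⟩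

lemma reduce_snd {ι : Type*} (s : Finset ι) (m : ι → M) (n : ι → N) :
    ∃ (q : ℕ) (a : Fin q → M) (f : Fin q → N), LinearIndependent k f ∧
      (∑ i ∈ s, m i ⊗ₜ[k] n i) = ∑ j, a j ⊗ₜ[k] f j ∧
      span k (Set.range f) = span k (n '' s) ∧
      q = finrank k (span k (n '' s)) := by
  classical
  set W := span k (n '' s) with hW
  haveI : FiniteDimensional k W :=
    FiniteDimensional.span_of_finite k (s.finite_toSet.image n)
  set B := Module.finBasis k W with hB
  set q := finrank k W
  set nW : ι → W := fun i =>
    if h : i ∈ s then ⟨n i, subset_span (Set.mem_image_of_mem n h)⟩ else 0 with hnW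
  refine ⟨q, fun j => ∑ i ∈ s, B.repr (nW i) j • m i, fun j => (B j : N),
    B.linearIndependent.map' W.subtype W.ker_subtype, ?_, ?_, rfl⟩
  · have key : ∀ i ∈ s, m i ⊗ₜ[k] n i = ∑ j, (B.repr (nW i) j • m i) ⊗ₜ[k] (B j : N) := by
      intro i hi
      have h1 : n i = ∑ j, B.repr (nW i) j • (B j : N) := by
        have h2 := congrArg (Subtype.val) (B.sum_repr (nW i))
        have h3 : ((nW i : W) : N) = n i := by simp [hnW, dif_pos hi]
        rw [h3] at h2
        rw [← h2, Submodule.coe_sum]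
        exact Finset.sum_congr rfl fun j _ => rfl
      rw [h1, TensorProduct.tmul_sum]
      exact Finset.sum_congr rfl fun j _ => by
        rw [TensorProduct.tmul_smul, TensorProduct.smul_tmul']
    rw [Finset.sum_congr rfl key, Finset.sum_comm]
    exact Finset.sum_congr rfl fun j _ => by rw [TensorProduct.sum_tmul]
  · have : (Set.range fun j => (B j : N)) = W.subtype '' Set.range B := by
      rw [← Set.range_comp]; rfl
    rw [this, Submodule.span_image, B.span_eq, Submodule.map_top, Submodule.range_subtype]


/-- span of the second legs -/
def sndSpan (x : M ⊗[k] N) : Submodule k N := fstSpan ((TensorProduct.comm k M N) x)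

lemma comm_comm (x : M ⊗[k] N) :
    (TensorProduct.comm k N M) ((TensorProduct.comm k M N) x) = x := by
  induction x using TensorProduct.induction_on with
  | zero => simp
  | tmul m n => simp
  | add a b ha hb => simp [ha, hb]

lemma exists_rep_fst (x : M ⊗[k] N) :
    ∃ (r : ℕ) (e : Fin r → M) (g : Fin r → N),
      x = ∑ i, e i ⊗ₜ[k] g i ∧ LinearIndependent k e ∧
      span k (Set.range e) = fstSpan x ∧ span k (Set.range g) = sndSpan x ∧
      r = finrank k (fstSpan x) := by
  classical
  obtain ⟨S, hS⟩ := TensorProduct.exists_finset x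
  obtain ⟨q, a, f, hf, hx1, _, _⟩ := reduce_snd (k := k) S (Prod.fst : M × N → M) (Prod.snd : M × N → N)
  rw [← hS] at hx1
  obtain ⟨r, g, e, he, hx2, hspanE, hr⟩ := reduce_snd (k := k) (Finset.univ : Finset (Fin q)) f a
  have hcx : (TensorProduct.comm k M N) x = ∑ i, g i ⊗ₜ[k] e i := by
    rw [hx1, map_sum]
    rw [Finset.sum_congr rfl fun j _ => TensorProduct.comm_tmul k M N (a j) (f j)]
    exact hx2
  have hx3 : x = ∑ i, e i ⊗ₜ[k] g i := by
    rw [← comm_comm x, hcx, map_sum]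
    exact Finset.sum_congr rfl fun i _ => TensorProduct.comm_tmul k N M (g i) (e i)
  have himg : (a '' ↑(Finset.univ : Finset (Fin q))) = Set.range a := by
    rw [Finset.coe_univ, Set.image_univ]
  have hrangeA : span k (a '' ↑(Finset.univ : Finset (Fin q))) = span k (Set.range a) := by
    rw [himg]
  have hspanA : span k (Set.range a) = fstSpan x := by
    apply le_antisymm
    · rw [span_le]; rintro _ ⟨j, rfl⟩; exact leg_mem_fstSpan hx1 hf j
    · exact (fstSpan_le hx1).trans (by rw [Finset.coe_univ, Set.image_univ])
  have hspanE' : span k (Set.range e) = fstSpan x := by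
    rw [hspanE, hrangeA, hspanA]
  refine ⟨r, e, g, hx3, he, hspanE', ?_, ?_⟩
  · apply le_antisymm
    · rw [span_le]; rintro _ ⟨i, rfl⟩; exact leg_mem_fstSpan hcx he i
    · exact (fstSpan_le hcx).trans (by rw [Finset.coe_univ, Set.image_univ])
  · rw [hr, hrangeA, hspanA]

lemma exists_good_rep (x : M ⊗[k] N) :
    ∃ (r : ℕ) (e : Fin r → M) (g : Fin r → N),
      x = ∑ i, e i ⊗ₜ[k] g i ∧ LinearIndependent k e ∧ LinearIndependent k g ∧
      span k (Set.range e) = fstSpan x ∧ span k (Set.range g) = sndSpan x := by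
  obtain ⟨r, e, g, hx, he, hE, hG, hr⟩ := exists_rep_fst x
  obtain ⟨r', e', g', hx', he', hE', hG', hr'⟩ := exists_rep_fst ((TensorProduct.comm k M N) x)
  haveI : FiniteDimensional k (sndSpan x) := by
    rw [← hG]; exact FiniteDimensional.span_of_finite k (Set.finite_range g)
  have h1 : finrank k (sndSpan x) ≤ r := by
    rw [← hG]
    simpa [Set.finrank] using finrank_range_le_card (R := k) g
  have hG'x : span k (Set.range g') = fstSpan x := by
    rw [hG']; unfold sndSpan; rw [comm_comm]
  have h2 : r ≤ r' := by
    rw [hr]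
    calc finrank k (fstSpan x) = finrank k (span k (Set.range g')) := by rw [hG'x]
    _ ≤ r' := by simpa [Set.finrank] using finrank_range_le_card (R := k) g'
  have h3 : r' = finrank k (sndSpan x) := hr'
  have hreq : r = finrank k (sndSpan x) := le_antisymm (h3 ▸ h2) h1
  -- g is linearly independent
  have hgmem : ∀ i, g i ∈ sndSpan x := fun i => hG ▸ subset_span ⟨i, rfl⟩
  set gS : Fin r → (sndSpan x) := fun i => ⟨g i, hgmem i⟩ with hgS
  have hspan_gS : span k (Set.range gS) = ⊤ := by
    apply Submodule.map_injective_of_injective (sndSpan x).injective_subtype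
    rw [Submodule.map_span, ← Set.range_comp, Submodule.map_top, Submodule.range_subtype]
    have hcomp : ((sndSpan x).subtype ∘ gS) = g := rfl
    rw [hcomp, hG]
  have hgS_li : LinearIndependent k gS :=
    linearIndependent_of_top_le_span_of_card_eq_finrank (ge_of_eq hspan_gS)
      (by simpa using hreq)
  have hg_li : LinearIndependent k g :=
    hgS_li.map' (sndSpan x).subtype (sndSpan x).ker_subtype
  exact ⟨r, e, g, hx, he, hg_li, hE, hG⟩

end GenLemmas
section Helpers
variable {k H : Type*} [Field k] [Ring H] [HopfAlgebra k H]

lemma prod_13_12 {n : ℕ} (a b : Fin n → H) :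
    (ι₁₃ k H (∑ i, a i ⊗ₜ[k] b i)) * (ι₁₂ k H (∑ i, a i ⊗ₜ[k] b i)) =
      ∑ i, ∑ j, (a i * a j) ⊗ₜ[k] ((b j) ⊗ₜ[k] (b i)) := by
  rw [map_sum, map_sum, Finset.sum_mul_sum]
  simp [Algebra.TensorProduct.tmul_mul_tmul]

lemma prod_13_23 {n : ℕ} (a b : Fin n → H) :
    (ι₁₃ k H (∑ i, a i ⊗ₜ[k] b i)) * (ι₂₃ k H (∑ i, a i ⊗ₜ[k] b i)) =
      ∑ i, ∑ j, (a i) ⊗ₜ[k] ((a j) ⊗ₜ[k] (b i * b j)) := by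
  rw [map_sum, map_sum, Finset.sum_mul_sum]
  simp [Algebra.TensorProduct.tmul_mul_tmul]

lemma idε_eq : (idε k H).toLinearMap =
    (TensorProduct.rid k H).toLinearMap ∘ₗ LinearMap.lTensor H (Coalgebra.counit (R := k)) := by
  ext x y
  simp

lemma εid_eq : (εid k H).toLinearMap =
    (TensorProduct.lid k H).toLinearMap ∘ₗ LinearMap.rTensor H (Coalgebra.counit (R := k)) := by
  ext x y
  simp

lemma idε_comul (y : H) : idε k H (Coalgebra.comul (R := k) y) = y := by
  have := LinearMap.congr_fun (idε_eq (k := k) (H := H)) (Coalgebra.comul (R := k) y)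
  simp only [AlgHom.toLinearMap_apply, LinearMap.comp_apply] at this
  rw [this, Coalgebra.lTensor_counit_comul (R := k) y]
  simp

lemma εid_comul (y : H) : εid k H (Coalgebra.comul (R := k) y) = y := by
  have := LinearMap.congr_fun (εid_eq (k := k) (H := H)) (Coalgebra.comul (R := k) y)
  simp only [AlgHom.toLinearMap_apply, LinearMap.comp_apply] at this
  rw [this, Coalgebra.rTensor_counit_comul (R := k) y]
  simp

end Helpers
section Idents
variable {k H : Type*} [Field k] [Ring H] [HopfAlgebra k H]

lemma ev2_rep {n : ℕ} (a : Fin n → H) (b : Fin n → H) (l : H →ₗ[k] k) :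
    ev2 l (∑ i, a i ⊗ₜ[k] b i) = ∑ i, l (b i) • a i := by
  rw [map_sum]; simp

lemma idε_rep {n : ℕ} {R : H ⊗[k] H} {a b : Fin n → H} (hrep : R = ∑ i, a i ⊗ₜ[k] b i) :
    idε k H R = ∑ i, Coalgebra.counit (R := k) (b i) • a i := by
  rw [hrep, map_sum]; simp

lemma εid_rep {n : ℕ} {R : H ⊗[k] H} {a b : Fin n → H} (hrep : R = ∑ i, a i ⊗ₜ[k] b i) :
    εid k H R = ∑ i, Coalgebra.counit (R := k) (a i) • b i := by
  rw [hrep, map_sum]; simp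

lemma idε_R_one {R : H ⊗[k] H} (hRu : IsUnit R)
    (hii : idΔ k H R = ι₁₃ k H R * ι₁₂ k H R)
    {n : ℕ} {a b : Fin n → H} (hrep : R = ∑ i, a i ⊗ₜ[k] b i) :
    idε k H R = 1 := by
  set χ := Algebra.TensorProduct.map (AlgHom.id k H) (idε k H) with hχ
  have h1 : χ (idΔ k H R) = R := by
    conv_lhs => rw [hrep, map_sum, map_sum]
    conv_rhs => rw [hrep]
    exact Finset.sum_congr rfl fun i _ => by simp [χ, idε_comul]
  have h2 : χ (ι₁₃ k H R * ι₁₂ k H R) = ((idε k H R) ⊗ₜ[k] (1:H)) * R := by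
    conv_lhs => rw [hrep, prod_13_12, map_sum]
    conv_rhs => rw [idε_rep hrep, hrep, TensorProduct.sum_tmul, Finset.sum_mul_sum]
    refine Finset.sum_congr rfl fun i _ => ?_
    rw [map_sum]
    refine Finset.sum_congr rfl fun j _ => ?_
    simp [χ, Algebra.TensorProduct.tmul_mul_tmul, TensorProduct.smul_tmul',
      smul_mul_assoc, TensorProduct.tmul_smul]
  have h3 : ((idε k H R) ⊗ₜ[k] (1:H)) * R = 1 * R := by
    rw [one_mul, ← h2, ← hii, h1]
  have h4 : (idε k H R) ⊗ₜ[k] (1:H) = 1 := hRu.mul_right_cancel h3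
  have h5 := congrArg (idε k H) h4
  simpa using h5

lemma εid_R_one {R : H ⊗[k] H} (hRu : IsUnit R)
    (hiii : Δid k H R = ι₁₃ k H R * ι₂₃ k H R)
    {n : ℕ} {a b : Fin n → H} (hrep : R = ∑ i, a i ⊗ₜ[k] b i) :
    εid k H R = 1 := by
  set φ := (Algebra.TensorProduct.lid k (H ⊗[k] H)).toAlgHom.comp
    (Algebra.TensorProduct.map (Bialgebra.counitAlgHom k H) (AlgHom.id k (H ⊗[k] H))) with hφ
  have hassoc : ∀ (t : H ⊗[k] H) (y : H),
      φ ((Algebra.TensorProduct.assoc k k k H H H) (t ⊗ₜ[k] y)) = (εid k H t) ⊗ₜ[k] y := by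
    intro t y
    induction t using TensorProduct.induction_on with
    | zero => simp
    | tmul u v => simp [φ, TensorProduct.smul_tmul']
    | add s t hs ht =>
      rw [TensorProduct.add_tmul, map_add, map_add, hs, ht, map_add,
        TensorProduct.add_tmul]
  have h1 : φ (Δid k H R) = R := by
    conv_lhs => rw [hrep, map_sum, map_sum]
    conv_rhs => rw [hrep]
    refine Finset.sum_congr rfl fun i _ => ?_
    have : Δid k H (a i ⊗ₜ[k] b i) =
        (Algebra.TensorProduct.assoc k k k H H H) ((Coalgebra.comul (R := k) (a i)) ⊗ₜ[k] b i) := by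
      simp
    rw [this, hassoc, εid_comul]
  have h2 : φ (ι₁₃ k H R * ι₂₃ k H R) = ((1:H) ⊗ₜ[k] (εid k H R)) * R := by
    conv_lhs => rw [hrep, prod_13_23, map_sum]
    conv_rhs => rw [εid_rep hrep, hrep, TensorProduct.tmul_sum, Finset.sum_mul_sum]
    refine Finset.sum_congr rfl fun i _ => ?_
    rw [map_sum]
    refine Finset.sum_congr rfl fun j _ => ?_
    simp [φ, Algebra.TensorProduct.tmul_mul_tmul, TensorProduct.smul_tmul',
      TensorProduct.tmul_smul, smul_mul_assoc, mul_smul_comm]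
  have h3 : ((1:H) ⊗ₜ[k] (εid k H R)) * R = 1 * R := by
    rw [one_mul, ← h2, ← hiii, h1]
  have h4 : (1:H) ⊗ₜ[k] (εid k H R) = 1 := hRu.mul_right_cancel h3
  have h5 := congrArg (εid k H) h4
  simpa using h5

end Idents
section Anti
variable {k H : Type*} [Field k] [Ring H] [HopfAlgebra k H]

lemma tau_tau (x : H ⊗[k] H) : τ k H (τ k H x) = x := by
  induction x using TensorProduct.induction_on with
  | zero => simp
  | tmul u v => simp
  | add s t hs ht => rw [map_add, map_add, hs, ht]

lemma tau_eq_comm (x : H ⊗[k] H) : τ k H x = (TensorProduct.comm k H H) x := by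
  induction x using TensorProduct.induction_on with
  | zero => simp
  | tmul u v => simp
  | add s t hs ht => rw [map_add, map_add, hs, ht]

lemma Sid_rep {n : ℕ} {R : H ⊗[k] H} {a b : Fin n → H} (hrep : R = ∑ i, a i ⊗ₜ[k] b i) :
    Sid k H R = ∑ i, (HopfAlgebra.antipode (R := k) (a i)) ⊗ₜ[k] b i := by
  rw [hrep, map_sum]; simp

lemma Sid_mul_R_eq_one {R : H ⊗[k] H}
    (hiii : Δid k H R = ι₁₃ k H R * ι₂₃ k H R) (hεid : εid k H R = 1)
    {n : ℕ} {a b : Fin n → H} (hrep : R = ∑ i, a i ⊗ₜ[k] b i) :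
    (Sid k H R) * R = 1 := by
  set f : H ⊗[k] H →ₗ[k] H :=
    LinearMap.mul' k H ∘ₗ LinearMap.rTensor H (HopfAlgebra.antipode (R := k)) with hf
  set θ : H ⊗[k] (H ⊗[k] H) →ₗ[k] H ⊗[k] H :=
    LinearMap.rTensor H f ∘ₗ (TensorProduct.assoc k H H H).symm.toLinearMap with hθ
  have hassoc : ∀ (t : H ⊗[k] H) (y : H),
      θ ((Algebra.TensorProduct.assoc k k k H H H) (t ⊗ₜ[k] y)) = (f t) ⊗ₜ[k] y := by
    intro t y
    induction t using TensorProduct.induction_on with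
    | zero => simp
    | tmul u v => simp [θ]
    | add s t hs ht =>
      rw [TensorProduct.add_tmul, map_add, map_add, hs, ht, map_add, TensorProduct.add_tmul]
  have h1 : θ (Δid k H R) = (1:H) ⊗ₜ[k] (εid k H R) := by
    conv_lhs => rw [hrep, map_sum, map_sum]
    rw [εid_rep hrep, TensorProduct.tmul_sum]
    refine Finset.sum_congr rfl fun i _ => ?_
    have hstep : Δid k H (a i ⊗ₜ[k] b i) =
        (Algebra.TensorProduct.assoc k k k H H H) ((Coalgebra.comul (R := k) (a i)) ⊗ₜ[k] b i) := by
      simp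
    rw [hstep, hassoc]
    have : f (Coalgebra.comul (R := k) (a i)) =
        algebraMap k H (Coalgebra.counit (R := k) (a i)) := by
      simpa [f] using HopfAlgebra.mul_antipode_rTensor_comul_apply (R := k) (a i)
    rw [this, Algebra.algebraMap_eq_smul_one]
    exact TensorProduct.smul_tmul _ _ _
  have h2 : θ (ι₁₃ k H R * ι₂₃ k H R) = (Sid k H R) * R := by
    conv_lhs => rw [hrep, prod_13_23, map_sum]
    conv_rhs => rw [Sid_rep hrep, hrep, Finset.sum_mul_sum]
    refine Finset.sum_congr rfl fun i _ => ?_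
    rw [map_sum]
    refine Finset.sum_congr rfl fun j _ => ?_
    have hstep : (a i) ⊗ₜ[k] ((a j) ⊗ₜ[k] (b i * b j)) =
        (Algebra.TensorProduct.assoc k k k H H H) (((a i) ⊗ₜ[k] (a j)) ⊗ₜ[k] (b i * b j)) := by
      simp
    rw [hstep, hassoc]
    simp [f, Algebra.TensorProduct.tmul_mul_tmul]
  have h3 : (Sid k H R) * R = (1:H) ⊗ₜ[k] (εid k H R) := by rw [← h2, ← hiii, h1]
  rw [h3, hεid]
  rfl

end Anti
set_option maxHeartbeats 1000000 in
/-- For a unitary universal R-matrix `R`, the image `F = H_l` of `α(l) = (id ⊗ l)(R)` is a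
Hopf subalgebra (closed under multiplication, comultiplication and antipode, containing 1)
with `R ∈ F ⊗ F`, and `R` is nondegenerate on `F`: the induced map `F* → F` is bijective. -/
theorem unitary_RMatrix_nondegenerate_on_image {k H : Type*} [Field k] [Ring H]
    [HopfAlgebra k H] (R : H ⊗[k] H) (hR : IsUnivRMatrix k H R) (hU : R * τ k H R = 1) :
    ((1 : H) ∈ Hl k H R ∧ ∀ x ∈ Hl k H R, ∀ y ∈ Hl k H R, x * y ∈ Hl k H R) ∧
    (∀ x ∈ Hl k H R, Coalgebra.comul (R := k) x ∈
      LinearMap.range (TensorProduct.mapIncl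
        (Submodule.span k (Hl k H R)) (Submodule.span k (Hl k H R)))) ∧
    (∀ x ∈ Hl k H R, HopfAlgebra.antipode (R := k) x ∈ Hl k H R) ∧
    (∃ R' : (Submodule.span k (Hl k H R)) ⊗[k] (Submodule.span k (Hl k H R)),
      TensorProduct.mapIncl _ _ R' = R ∧
      Function.Bijective (fun m : (Submodule.span k (Hl k H R)) →ₗ[k] k =>
        (TensorProduct.rid k (Submodule.span k (Hl k H R)))
          (LinearMap.lTensor _ m R'))) := by
  classical
  obtain ⟨hRu, hcom, hii, hiii⟩ := hR
  obtain ⟨n, a, b, hrep, ha, hb, hspa, hspb⟩ := exists_good_rep R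
  set F := Submodule.span k (Hl k H R) with hF
  have hFfst : F = fstSpan R := rfl
  -- the set Hl is a linear subspace
  have hHl_ev : ∀ l : H →ₗ[k] k, evR k H l R = ev2 l R := fun l => rfl
  have hzero : (0 : H) ∈ Hl k H R := ⟨0, by simp [evR, ev2]⟩
  have hadd : ∀ x ∈ Hl k H R, ∀ y ∈ Hl k H R, x + y ∈ Hl k H R := by
    rintro _ ⟨l, rfl⟩ _ ⟨l', rfl⟩
    refine ⟨l + l', ?_⟩
    show ev2 (l + l') R = ev2 l R + ev2 l' R
    simp [ev2, LinearMap.lTensor_add, LinearMap.add_apply]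
  have hsmul : ∀ (c : k), ∀ x ∈ Hl k H R, c • x ∈ Hl k H R := by
    rintro c _ ⟨l, rfl⟩
    refine ⟨c • l, ?_⟩
    show ev2 (c • l) R = c • ev2 l R
    simp [ev2, LinearMap.lTensor_smul, LinearMap.smul_apply]
  have hsubmod : ∀ x ∈ F, x ∈ Hl k H R := by
    intro x hx
    induction hx using Submodule.span_induction with
    | mem x hx => exact hx
    | zero => exact hzero
    | add x y _ _ hx hy => exact hadd x hx y hy
    | smul c x _ hx => exact hsmul c x hx
  -- 1 ∈ Hl
  have hidε : idε k H R = 1 := idε_R_one hRu hii hrep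
  have h1mem : (1 : H) ∈ Hl k H R := by
    refine ⟨Coalgebra.counit (R := k), ?_⟩
    have h := LinearMap.congr_fun (idε_eq (k := k) (H := H)) R
    simp only [AlgHom.toLinearMap_apply, LinearMap.comp_apply] at h
    show (TensorProduct.rid k H).toLinearMap
      ((LinearMap.lTensor H (Coalgebra.counit (R := k))) R) = 1
    rw [← h, hidε]
  -- closed under multiplication
  have hmul : ∀ x ∈ Hl k H R, ∀ y ∈ Hl k H R, x * y ∈ Hl k H R := by
    rintro _ ⟨l, rfl⟩ _ ⟨l', rfl⟩
    set Q : H ⊗[k] H →ₗ[k] k := LinearMap.mul' k k ∘ₗ TensorProduct.map l' l with hQ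
    have h1 : ev2 Q (idΔ k H R) = ev2 (Q ∘ₗ Coalgebra.comul (R := k)) R := by
      conv_lhs => rw [hrep, map_sum, map_sum]
      rw [hrep, ev2_rep]
      refine Finset.sum_congr rfl fun i _ => ?_
      simp
    have h2 : ev2 Q (ι₁₃ k H R * ι₁₂ k H R) = (ev2 l R) * (ev2 l' R) := by
      conv_lhs => rw [hrep, prod_13_12, map_sum]
      conv_rhs => rw [hrep, ev2_rep, ev2_rep, Finset.sum_mul_sum]
      refine Finset.sum_congr rfl fun i _ => ?_
      rw [map_sum]
      refine Finset.sum_congr rfl fun j _ => ?_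
      simp only [ev2_tmul, Q, LinearMap.comp_apply, TensorProduct.map_tmul,
        LinearMap.mul'_apply, smul_mul_assoc, mul_smul_comm, smul_smul]
    refine ⟨Q ∘ₗ Coalgebra.comul (R := k), ?_⟩
    show ev2 (Q ∘ₗ Coalgebra.comul (R := k)) R = ev2 l R * ev2 l' R
    rw [← h1, hii, h2]
  -- closed under comultiplication
  have hcomul : ∀ x ∈ Hl k H R, Coalgebra.comul (R := k) x ∈
      LinearMap.range (TensorProduct.mapIncl F F) := by
    rintro _ ⟨l, rfl⟩
    set χ : H ⊗[k] (H ⊗[k] H) →ₗ[k] H ⊗[k] H := LinearMap.lTensor H (ev2 l) with hχ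
    have hassoc : ∀ (t : H ⊗[k] H) (y : H),
        χ ((Algebra.TensorProduct.assoc k k k H H H) (t ⊗ₜ[k] y)) = l y • t := by
      intro t y
      induction t using TensorProduct.induction_on with
      | zero => simp
      | tmul u v => simp [χ, TensorProduct.tmul_smul, TensorProduct.smul_tmul']
      | add s t hs ht => rw [TensorProduct.add_tmul, map_add, map_add, hs, ht, smul_add]
    have h1 : χ (Δid k H R) = Coalgebra.comul (R := k) (ev2 l R) := by
      conv_lhs => rw [hrep, map_sum, map_sum]
      rw [hrep, ev2_rep, map_sum]
      refine Finset.sum_congr rfl fun i _ => ?_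
      have hstep : Δid k H (a i ⊗ₜ[k] b i) = (Algebra.TensorProduct.assoc k k k H H H)
          ((Coalgebra.comul (R := k) (a i)) ⊗ₜ[k] b i) := by simp
      rw [hstep, hassoc, map_smul]
    have h2 : χ (ι₁₃ k H R * ι₂₃ k H R) =
        ∑ i, ∑ j, l (b i * b j) • ((a i) ⊗ₜ[k] (a j)) := by
      conv_lhs => rw [hrep, prod_13_23, map_sum]
      refine Finset.sum_congr rfl fun i _ => ?_
      rw [map_sum]
      refine Finset.sum_congr rfl fun j _ => ?_
      simp [χ, TensorProduct.tmul_smul]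
    have hmem : ∀ i j : Fin n, (a i) ⊗ₜ[k] (a j) ∈
        LinearMap.range (TensorProduct.mapIncl F F) := by
      intro i j
      have hai : a i ∈ F := by rw [hFfst, ← hspa]; exact Submodule.subset_span ⟨i, rfl⟩
      have haj : a j ∈ F := by rw [hFfst, ← hspa]; exact Submodule.subset_span ⟨j, rfl⟩
      exact ⟨(⟨a i, hai⟩ : F) ⊗ₜ[k] (⟨a j, haj⟩ : F), rfl⟩
    show Coalgebra.comul (R := k) (ev2 l R) ∈ _
    rw [← h1, hiii, h2]
    exact Submodule.sum_mem _ fun i _ => Submodule.sum_mem _ fun j _ =>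
      Submodule.smul_mem _ _ (hmem i j)
  -- antipode part
  have hτmul : τ k H R * R = 1 := by
    have h := congrArg (τ k H) hU
    rw [map_mul, tau_tau, map_one] at h
    exact h
  have hεidR : εid k H R = 1 := εid_R_one hRu hiii hrep
  have hSmul : Sid k H R * R = 1 := Sid_mul_R_eq_one hiii hεidR hrep
  have hSid : Sid k H R = τ k H R := by
    calc Sid k H R = Sid k H R * (R * τ k H R) := by rw [hU, mul_one]
    _ = (Sid k H R * R) * τ k H R := by rw [mul_assoc]
    _ = τ k H R := by rw [hSmul, one_mul]
  have hrep2 : R = ∑ i, b i ⊗ₜ[k] (HopfAlgebra.antipode (R := k) (a i)) := by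
    have h := congrArg (τ k H) hSid
    rw [tau_tau] at h
    rw [← h, Sid_rep hrep, map_sum]
    simp
  have hrep3 : (TensorProduct.comm k H H) R =
      ∑ i, (HopfAlgebra.antipode (R := k) (a i)) ⊗ₜ[k] b i := by
    rw [← tau_eq_comm, ← hSid, Sid_rep hrep]
  set G := sndSpan R with hG
  have hFG : F ≤ G := by
    rw [hFfst]
    refine (fstSpan_le hrep2).trans ?_
    rw [Finset.coe_univ, Set.image_univ, hspb]
  have hGle : G ≤ Submodule.map (HopfAlgebra.antipode (R := k)) F := by
    refine (fstSpan_le hrep3).trans ?_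
    rw [Finset.coe_univ, Set.image_univ]
    have hh : (Set.range fun i => HopfAlgebra.antipode (R := k) (a i)) =
        (HopfAlgebra.antipode (R := k)) '' Set.range a := by
      rw [← Set.range_comp]; rfl
    rw [hh, ← Submodule.map_span, hspa, hFfst]
  have eF : Submodule.span k (Set.range a) = F := by rw [hFfst, hspa]
  have eG : Submodule.span k (Set.range b) = G := hspb
  haveI hFD : FiniteDimensional k F := eF ▸ FiniteDimensional.span_of_finite k (Set.finite_range a)
  haveI hGD : FiniteDimensional k G := eG ▸ FiniteDimensional.span_of_finite k (Set.finite_range b)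
  haveI : Module.Finite k (Submodule.map (HopfAlgebra.antipode (R := k)) F) :=
    Module.Finite.map F (HopfAlgebra.antipode (R := k))
  have hrk2 : Module.finrank k (Submodule.map (HopfAlgebra.antipode (R := k)) F) ≤
      Module.finrank k F := Submodule.finrank_map_le _ _
  have hrk3 : Module.finrank k G ≤
      Module.finrank k (Submodule.map (HopfAlgebra.antipode (R := k)) F) :=
    Submodule.finrank_mono hGle
  have hFG_eq : F = G := Submodule.eq_of_le_of_finrank_le hFG (hrk3.trans hrk2)
  have hGmap : G = Submodule.map (HopfAlgebra.antipode (R := k)) F :=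
    Submodule.eq_of_le_of_finrank_le hGle (hrk2.trans (le_of_eq (by rw [hFG_eq])))
  have hmapS : Submodule.map (HopfAlgebra.antipode (R := k)) F = F := by
    rw [← hGmap, ← hFG_eq]
  have hanti : ∀ x ∈ Hl k H R, HopfAlgebra.antipode (R := k) x ∈ Hl k H R := by
    intro x hx
    have hxF : x ∈ F := Submodule.subset_span hx
    have hmem : HopfAlgebra.antipode (R := k) x ∈
        Submodule.map (HopfAlgebra.antipode (R := k)) F := ⟨x, hxF, rfl⟩
    rw [hmapS] at hmem
    exact hsubmod _ hmem
  -- nondegeneracy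
  have haF : ∀ i, a i ∈ F := fun i => by rw [hFfst, ← hspa]; exact Submodule.subset_span ⟨i, rfl⟩
  have hbF : ∀ i, b i ∈ F := fun i => by rw [hFG_eq, ← hspb]; exact Submodule.subset_span ⟨i, rfl⟩
  set R' : F ⊗[k] F := ∑ i, (⟨a i, haF i⟩ : F) ⊗ₜ[k] (⟨b i, hbF i⟩ : F) with hR'
  have hmapIncl : TensorProduct.mapIncl F F R' = R := by
    rw [hR', map_sum]
    conv_rhs => rw [hrep]
    rfl
  set Θ : Module.Dual k F →ₗ[k] F :=
    { toFun := fun m => (TensorProduct.rid k F) (LinearMap.lTensor F m R'),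
      map_add' := fun m m' => by
        simp only [LinearMap.lTensor_add, LinearMap.add_apply, map_add],
      map_smul' := fun c m => by
        simp only [LinearMap.lTensor_smul, LinearMap.smul_apply, map_smul,
          RingHom.id_apply] } with hΘdef
  have hΘ : ∀ m : Module.Dual k F, Θ m = ∑ i, m ⟨b i, hbF i⟩ • (⟨a i, haF i⟩ : F) := by
    intro m
    show (TensorProduct.rid k F) (LinearMap.lTensor F m R') = _
    rw [hR', map_sum, map_sum]
    simp
  have ha' : LinearIndependent k (fun i => (⟨a i, haF i⟩ : F)) := by
    apply LinearIndependent.of_comp F.subtype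
    exact ha
  have hb'span : Submodule.span k (Set.range fun i => (⟨b i, hbF i⟩ : F)) = ⊤ := by
    apply Submodule.map_injective_of_injective F.injective_subtype
    rw [Submodule.map_span, ← Set.range_comp, Submodule.map_top, Submodule.range_subtype]
    have hcomp : (F.subtype ∘ fun i => (⟨b i, hbF i⟩ : F)) = b := rfl
    rw [hcomp, hspb, ← hFG_eq]
  have hinj : Function.Injective Θ := by
    intro m m' hmm'
    have he : Θ m = Θ m' := hmm'
    rw [hΘ, hΘ] at he
    have h0 : ∑ i, (m ⟨b i, hbF i⟩ - m' ⟨b i, hbF i⟩) • (⟨a i, haF i⟩ : F) = 0 := by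
      calc ∑ i, (m ⟨b i, hbF i⟩ - m' ⟨b i, hbF i⟩) • (⟨a i, haF i⟩ : F)
          = ∑ i, (m ⟨b i, hbF i⟩ • (⟨a i, haF i⟩ : F) -
              m' ⟨b i, hbF i⟩ • (⟨a i, haF i⟩ : F)) :=
            Finset.sum_congr rfl fun i _ => Subtype.ext (by simp [sub_smul])
        _ = 0 := by rw [Finset.sum_sub_distrib, he, sub_self]
    have hcoef := linearIndependent_iff'.mp ha' Finset.univ _ h0
    refine LinearMap.ext_on hb'span ?_
    rintro _ ⟨i, rfl⟩
    exact sub_eq_zero.mp (hcoef i (Finset.mem_univ i))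
  have hsurj : Function.Surjective Θ := by
    have hfr : Module.finrank k (Module.Dual k F) = Module.finrank k F :=
      Subspace.dual_finrank_eq
    exact (LinearMap.injective_iff_surjective_of_finrank_eq_finrank hfr).mp hinj
  exact ⟨⟨h1mem, hmul⟩, hcomul, hanti, R', hmapIncl, hinj, hsurj⟩

end
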